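/- Let D' be a digraph of order n−1 whose underlying graph is a tree and with γ_OL(D') = n−1, and let b be a domination-forced vertex of D'. Form D by adding a new vertex a with arcs ba and aa (a loop at a). Then the underlying graph of D is a tree and γ_OL(D) = n. -/

import Mathlib

open scoped symmDiff

/-- The open in-neighbourhood of `v` in the digraph `D` (loops allowed). -/
def Nin {V : Type*} (D : V → V → Prop) (v : V) : Set V := {u | D u v}

/-- A digraph is locatable if every vertex has positive in-degree and
open in-neighbourhoods are pairwise distinct. -/
def Locatable {V : Type*} (D : V → V → Prop) : Prop :=
  (∀ v, (Nin D v).Nonempty) ∧ ∀ x y, Nin D x = Nin D y → x = y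

/-- `S` is an open neighbourhood locating-dominating set of `D`. -/
def IsOLD {V : Type*} (D : V → V → Prop) (S : Set V) : Prop :=
  (∀ v, ∃ u ∈ S, D u v) ∧ ∀ x y, x ≠ y → ∃ s ∈ S, s ∈ Nin D x ∆ Nin D y

/-- The OLD number `γ_OL(D)`: minimum size of an OLD set. -/
noncomputable def oldNum {V : Type*} (D : V → V → Prop) : ℕ :=
  sInf {k | ∃ S : Set V, IsOLD D S ∧ S.ncard = k}

/-- `v` is domination-forced: it is the unique in-neighbour of some vertex. -/
def DomForced {V : Type*} (D : V → V → Prop) (v : V) : Prop := ∃ w, Nin D w = {v}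

/-- `v` is location-forced: some pair of distinct vertices has
in-neighbourhood symmetric difference `{v}`. -/
def LocForced {V : Type*} (D : V → V → Prop) (v : V) : Prop :=
  ∃ x y, x ≠ y ∧ Nin D x ∆ Nin D y = {v}

/-- The arc `xy` is a forcing arc. -/
def ForcingArc {V : Type*} (D : V → V → Prop) (x y : V) : Prop :=
  Nin D y = {x} ∨ ∃ z, Nin D y ∆ Nin D z = {x} ∧ x ∈ Nin D y

/-- The underlying simple undirected graph of a digraph. -/
def underlying {V : Type*} (D : V → V → Prop) : SimpleGraph V where
  Adj x y := x ≠ y ∧ (D x y ∨ D y x)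
  symm := ⟨fun x y h => ⟨h.1.symm, h.2.symm⟩⟩
  loopless := ⟨fun x h => h.1 rfl⟩

theorem stmt_18 {V : Type*} [Fintype V] (D' : V → V → Prop) (b : V)
    (htree : (underlying D').IsTree) (hext : oldNum D' = Fintype.card V)
    (hb : DomForced D' b)
    (D : Option V → Option V → Prop)
    (hD : ∀ x y, D x y ↔
      ((∃ u v, x = some u ∧ y = some v ∧ D' u v) ∨
        (x = some b ∧ y = none) ∨ (x = none ∧ y = none))) :
    (underlying D).IsTree ∧ oldNum D = Fintype.card (Option V) := by
  classical
  have hadjD : ∀ a c : Option V, (underlying D).Adj a c ↔ (a ≠ c ∧ (D a c ∨ D c a)) :=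
    fun _ _ => Iff.rfl
  have hadjD' : ∀ a c : V, (underlying D').Adj a c ↔ (a ≠ c ∧ (D' a c ∨ D' c a)) :=
    fun _ _ => Iff.rfl
  -- adjacency between `some` vertices matches adjacency in D'
  have hadj : ∀ x y : V, (underlying D).Adj (some x) (some y) ↔ (underlying D').Adj x y := by
    intro x y
    rw [hadjD, hadjD', hD, hD]
    constructor
    · rintro ⟨hne, h⟩
      refine ⟨fun h' => hne (by rw [h']), ?_⟩
      rcases h with (⟨u, v, hu, hv, h⟩ | ⟨_, h⟩ | ⟨h, _⟩) | (⟨u, v, hu, hv, h⟩ | ⟨_, h⟩ | ⟨h, _⟩) <;>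
        simp_all
    · rintro ⟨hne, h⟩
      refine ⟨fun h' => hne (by injection h'), ?_⟩
      rcases h with h | h
      · exact Or.inl (Or.inl ⟨x, y, rfl, rfl, h⟩)
      · exact Or.inr (Or.inl ⟨y, x, rfl, rfl, h⟩)
  -- the only neighbour of `none` is `some b`
  have hnbr : ∀ x : Option V, (underlying D).Adj x none → x = some b := by
    intro x hx
    rw [hadjD, hD, hD] at hx
    obtain ⟨hne, h⟩ := hx
    rcases h with (⟨u, v, hu, hv, h⟩ | ⟨h1, h2⟩ | ⟨h1, h2⟩) | (⟨u, v, hu, hv, h⟩ | ⟨h1, h2⟩ | ⟨h1, h2⟩) <;>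
      simp_all
  -- the hom from underlying D' to underlying D
  let f : underlying D' →g underlying D :=
    ⟨some, fun {a c} h => (hadj a c).2 h⟩
  have hfinj : Function.Injective f := Option.some_injective V
  have hbn : (underlying D).Adj (some b) none := by
    rw [hadjD]
    exact ⟨by simp, Or.inl ((hD _ _).2 (Or.inr (Or.inl ⟨rfl, rfl⟩)))⟩
  -- connectedness
  have hconn : (underlying D).Connected := by
    have hpre : (underlying D).Preconnected := by
      have hr : ∀ x : V, (underlying D).Reachable (some x) none := by
        intro x
        exact ((htree.isConnected.preconnected x b).map f).trans hbn.reachable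
      rintro (_ | u) (_ | v)
      · exact SimpleGraph.Reachable.refl _
      · exact (hr v).symm
      · exact hr u
      · exact (htree.isConnected.preconnected u v).map f
    have : Nonempty (Option V) := ⟨none⟩
    exact SimpleGraph.Connected.mk hpre
  -- acyclicity
  have hlift : ∀ {x y : Option V} (p : (underlying D).Walk x y), none ∉ p.support →
      ∀ (x' y' : V) (hx : x = some x') (hy : y = some y'),
      ∃ q : (underlying D').Walk x' y', q.map f = p.copy hx hy := by
    intro x y p
    induction p with
    | nil =>
      intro hn x' y' hx hy
      subst hx
      obtain rfl : x' = y' := by injection hy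
      exact ⟨SimpleGraph.Walk.nil, by simp⟩
    | @cons u v w h p ih =>
      intro hn x' y' hx hy
      have hv : v ≠ none := by
        intro hv
        apply hn
        rw [SimpleGraph.Walk.support_cons]
        exact List.mem_cons_of_mem _ (hv ▸ p.start_mem_support)
      obtain ⟨v', rfl⟩ := Option.ne_none_iff_exists'.1 hv
      have hn' : none ∉ p.support := fun hc => hn (by
        rw [SimpleGraph.Walk.support_cons]; exact List.mem_cons_of_mem _ hc)
      obtain ⟨q, hq⟩ := ih hn' v' y' rfl hy
      subst hx
      subst hy
      have h' : (underlying D').Adj x' v' := (hadj x' v').1 h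
      refine ⟨SimpleGraph.Walk.cons h' q, ?_⟩
      simp only [SimpleGraph.Walk.map_cons, SimpleGraph.Walk.copy_rfl_rfl] at *
      rw [hq]
  have hacyc : (underlying D).IsAcyclic := by
    intro v c hc
    by_cases hn : (none : Option V) ∈ c.support
    · have hc' := hc.rotate hn
      revert hc'
      generalize c.rotate none hn = c'
      intro hc'
      cases c' with
      | nil => exact SimpleGraph.Walk.IsCycle.not_of_nil hc'
      | cons h q =>
        rename_i x
        obtain rfl : x = some b := hnbr _ h.symm
        rw [SimpleGraph.Walk.cons_isCycle_iff] at hc'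
        obtain ⟨hqp, hqe⟩ := hc'
        apply hqe
        have hnn : ¬ q.reverse.Nil := SimpleGraph.Walk.not_nil_of_ne (by simp)
        have h1 : q.reverse.getVert 1 = some b :=
          hnbr _ (SimpleGraph.Walk.adj_snd hnn).symm
        have h2 : s(none, some b) ∈ q.reverse.edges := by
          rw [← SimpleGraph.Walk.cons_tail_eq q.reverse hnn, SimpleGraph.Walk.edges_cons]
          exact List.mem_cons.2 (Or.inl (by rw [show q.reverse.snd = some b from h1]))
        rw [SimpleGraph.Walk.edges_reverse, List.mem_reverse] at h2
        exact h2
    · have hv : v ≠ none := fun hv => hn (hv ▸ c.start_mem_support)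
      obtain ⟨v', rfl⟩ := Option.ne_none_iff_exists'.1 hv
      obtain ⟨q, hq⟩ := hlift c hn v' v' rfl rfl
      have hqc : (q.map f).IsCycle := by
        rw [hq]
        exact (SimpleGraph.Walk.isCycle_copy c rfl).2 hc
      rw [SimpleGraph.Walk.map_isCycle_iff_of_injective hfinj] at hqc
      exact htree.IsAcyclic q hqc
  refine ⟨⟨hconn, hacyc⟩, ?_⟩
  -- Part 2 : oldNum
  have hVne : Nonempty V := htree.isConnected.nonempty
  have hNin_some : ∀ v : V, Nin D (some v) = some '' Nin D' v := by
    intro v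
    ext u
    constructor
    · intro hu
      rcases (hD u (some v)).1 hu with ⟨a, c, rfl, hc, h⟩ | ⟨_, hc⟩ | ⟨_, hc⟩
      · obtain rfl : v = c := by injection hc
        exact ⟨a, h, rfl⟩
      · exact nomatch hc
      · exact nomatch hc
    · rintro ⟨a, ha, rfl⟩
      exact (hD _ _).2 (Or.inl ⟨a, v, rfl, rfl, ha⟩)
  have hNin_none : Nin D none = {some b, none} := by
    ext u
    constructor
    · intro hu
      rcases (hD u none).1 hu with ⟨a, c, _, hc, _⟩ | ⟨h1, _⟩ | ⟨h1, _⟩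
      · exact nomatch hc
      · exact Or.inl h1
      · exact Or.inr h1
    · rintro (rfl | rfl)
      · exact (hD _ _).2 (Or.inr (Or.inl ⟨rfl, rfl⟩))
      · exact (hD _ _).2 (Or.inr (Or.inr ⟨rfl, rfl⟩))
  -- facts about D'
  have hsetne : {k | ∃ S : Set V, IsOLD D' S ∧ S.ncard = k}.Nonempty := by
    by_contra h
    rw [Set.not_nonempty_iff_eq_empty] at h
    have h2 : oldNum D' = 0 := by
      unfold oldNum
      rw [h, Nat.sInf_empty]
    rw [hext] at h2
    exact (Fintype.card_pos (α := V)).ne' h2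
  obtain ⟨S₀, hS₀, hS₀card⟩ : ∃ S : Set V, IsOLD D' S ∧ S.ncard = oldNum D' :=
    Nat.sInf_mem hsetne
  have hD'univ : IsOLD D' Set.univ :=
    ⟨fun v => (hS₀.1 v).imp (fun u hu => ⟨trivial, hu.2⟩),
     fun x y h => (hS₀.2 x y h).imp (fun s hs => ⟨trivial, hs.2⟩)⟩
  have hdom : ∀ v, ∃ u, D' u v := fun v => (hD'univ.1 v).imp fun u h => h.2
  have hsep : ∀ x y : V, x ≠ y → Nin D' x ≠ Nin D' y := by
    intro x y h heq
    obtain ⟨s, _, hs⟩ := hD'univ.2 x y h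
    rw [heq] at hs
    simp [Set.mem_symmDiff] at hs
  have hlower : ∀ S : Set V, IsOLD D' S → Fintype.card V ≤ S.ncard := by
    intro S hS
    rw [← hext]
    exact Nat.sInf_le ⟨S, hS, rfl⟩
  obtain ⟨w, hw⟩ := hb
  -- univ is OLD for D
  have hub : IsOLD D Set.univ := by
    constructor
    · rintro (_ | v)
      · exact ⟨none, trivial, (hD _ _).2 (Or.inr (Or.inr ⟨rfl, rfl⟩))⟩
      · obtain ⟨u, hu⟩ := hdom v
        exact ⟨some u, trivial, (hD _ _).2 (Or.inl ⟨u, v, rfl, rfl, hu⟩)⟩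
    · rintro (_ | x) (_ | y) hxy
      · exact absurd rfl hxy
      · refine ⟨none, trivial, ?_⟩
        rw [Set.mem_symmDiff, hNin_none, hNin_some]
        exact Or.inl ⟨Or.inr rfl, by rintro ⟨a, _, h⟩; exact nomatch h⟩
      · refine ⟨none, trivial, ?_⟩
        rw [Set.mem_symmDiff, hNin_none, hNin_some]
        exact Or.inr ⟨Or.inr rfl, by rintro ⟨a, _, h⟩; exact nomatch h⟩
      · have hxy' : x ≠ y := fun h => hxy (by rw [h])
        have := hsep x y hxy'
        have hex : ∃ s, s ∈ Nin D' x ∆ Nin D' y := by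
          by_contra hno
          push_neg at hno
          apply this
          ext u
          constructor
          · intro hu
            by_contra hu'
            exact hno u (Set.mem_symmDiff.2 (Or.inl ⟨hu, hu'⟩))
          · intro hu
            by_contra hu'
            exact hno u (Set.mem_symmDiff.2 (Or.inr ⟨hu, hu'⟩))
        obtain ⟨s, hs⟩ := hex
        refine ⟨some s, trivial, ?_⟩
        rw [Set.mem_symmDiff] at hs ⊢
        rw [hNin_some, hNin_some]
        rcases hs with ⟨h1, h2⟩ | ⟨h1, h2⟩
        · refine Or.inl ⟨⟨s, h1, rfl⟩, ?_⟩
          rintro ⟨a, ha, hae⟩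
          exact h2 ((Option.some_inj.1 hae) ▸ ha)
        · refine Or.inr ⟨⟨s, h1, rfl⟩, ?_⟩
          rintro ⟨a, ha, hae⟩
          exact h2 ((Option.some_inj.1 hae) ▸ ha)
  -- every OLD set of D is univ
  have hall : ∀ S : Set (Option V), IsOLD D S → S = Set.univ := by
    intro S hS
    have hwNin : Nin D (some w) = {some b} := by
      rw [hNin_some, hw]
      simp
    have hnone : (none : Option V) ∈ S := by
      obtain ⟨s, hsS, hs⟩ := hS.2 none (some w) (by simp)
      rw [Set.mem_symmDiff, hNin_none, hwNin] at hs
      have : s = none := by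
        rcases hs with ⟨h1, h2⟩ | ⟨h1, h2⟩
        · rcases h1 with rfl | rfl
          · exact absurd rfl h2
          · rfl
        · exact absurd (Or.inl h1) h2
      exact this ▸ hsS
    have hT : IsOLD D' {v | some v ∈ S} := by
      constructor
      · intro v
        obtain ⟨u, huS, hu⟩ := hS.1 (some v)
        rw [hD] at hu
        rcases hu with ⟨a, c, rfl, hc, h⟩ | ⟨_, h⟩ | ⟨_, h⟩
        · obtain rfl : v = c := by injection hc
          exact ⟨a, huS, h⟩
        · exact nomatch h
        · exact nomatch h
      · intro x y hxy
        obtain ⟨s, hsS, hs⟩ := hS.2 (some x) (some y) (by simpa using hxy)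
        rw [Set.mem_symmDiff, hNin_some, hNin_some] at hs
        rcases hs with ⟨⟨s', hs', rfl⟩, hnot⟩ | ⟨⟨s', hs', rfl⟩, hnot⟩
        · exact ⟨s', hsS, Set.mem_symmDiff.2 (Or.inl ⟨hs', fun h => hnot ⟨s', h, rfl⟩⟩)⟩
        · exact ⟨s', hsS, Set.mem_symmDiff.2 (Or.inr ⟨hs', fun h => hnot ⟨s', h, rfl⟩⟩)⟩

    have he : {v : V | some v ∈ S} = Set.univ := by
      apply Set.eq_of_subset_of_ncard_le (Set.subset_univ _)
      rw [Set.ncard_univ, Nat.card_eq_fintype_card]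
      exact hlower _ hT
    rw [Set.eq_univ_iff_forall]
    rintro (_ | v)
    · exact hnone
    · exact Set.eq_univ_iff_forall.1 he v
  -- conclude
  have hset : {k | ∃ S : Set (Option V), IsOLD D S ∧ S.ncard = k}
      = {Fintype.card (Option V)} := by
    ext k
    simp only [Set.mem_setOf_eq, Set.mem_singleton_iff]
    constructor
    · rintro ⟨S, hS, rfl⟩
      rw [hall S hS, Set.ncard_univ, Nat.card_eq_fintype_card]
    · rintro rfl
      exact ⟨Set.univ, hub, by rw [Set.ncard_univ, Nat.card_eq_fintype_card]⟩
  unfold oldNum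
  rw [hset, csInf_singleton]
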